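/- Let x_1,...,x_n lie in a commutative ring, e_k = e_k(x_1,...,x_n), and let Q_m be the (m-n)×(m-n) upper-Hessenberg matrix (m > n) with diagonal entries e_1, subdiagonal entries -1, entry (s,t) equal to (-1)^{t-s} e_{t-s+1} for t ≥ s (interpreted as 0 when t-s+1 > n), and zeros below the subdiagonal. Then det Q_m = h_{m-n}(x_1,...,x_n), the complete homogeneous symmetric polynomial of degree m-n. -/

import Mathlib

/-- The `k`-th elementary symmetric polynomial of `x_0, …, x_{m-1}`. -/
def esymmAux {R : Type*} [CommRing R] {m : ℕ} (x : Fin m → R) (k : ℕ) : R :=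
  ∑ s ∈ Finset.powersetCard k Finset.univ, ∏ i ∈ s, x i

/-- The complete homogeneous symmetric polynomial of degree `d` in `x_0, …, x_{n-1}`. -/
def hsymmAux {R : Type*} [CommRing R] {n : ℕ} (x : Fin n → R) (d : ℕ) : R :=
  ∑ m ∈ Finset.Nat.antidiagonalTuple n d, ∏ i, x i ^ m i

namespace Stmt13Aux

variable {R : Type*} [CommRing R] {n : ℕ}

lemma esymmAux_zero (x : Fin n → R) : esymmAux x 0 = 1 := by
  simp [esymmAux]

lemma hsymmAux_zero (x : Fin n → R) : hsymmAux x 0 = 1 := by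
  simp [hsymmAux, Finset.Nat.antidiagonalTuple_zero_right]

/-- the sign-reversing involution -/
def invo {n : ℕ} (z : Fin n) (p : Σ _ : Finset (Fin n), (Fin n → ℕ)) :
    Σ _ : Finset (Fin n), (Fin n → ℕ) :=
  let i := ((p.1 ∪ Finset.univ.filter (fun j => p.2 j ≠ 0)).max).getD z
  if i ∈ p.1 then ⟨p.1.erase i, Function.update p.2 i (p.2 i + 1)⟩
  else ⟨insert i p.1, Function.update p.2 i (p.2 i - 1)⟩

lemma getD_max {α : Type*} [LinearOrder α] (A : Finset α) (z i : α) (hi : i ∈ A)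
    (hub : ∀ j ∈ A, j ≤ i) : A.max.getD z = i := by
  have hne : A.Nonempty := ⟨i, hi⟩
  rw [← Finset.coe_max' hne]
  show A.max' hne = i
  exact le_antisymm (Finset.max'_le _ _ _ hub) (Finset.le_max' _ _ hi)

lemma key (x : Fin n → R) (N : ℕ) (hN : 1 ≤ N) :
    ∑ k ∈ Finset.range (N + 1), (-1 : R) ^ k * esymmAux x k * hsymmAux x (N - k) = 0 := by
  classical
  rcases Nat.eq_zero_or_pos n with hn | hn
  · -- degenerate case n = 0
    subst hn
    apply Finset.sum_eq_zero
    intro k hk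
    rcases Nat.eq_zero_or_pos k with rfl | hk1
    · have h1 : hsymmAux x N = 0 := by
        unfold hsymmAux
        convert Finset.sum_empty
        rw [Finset.eq_empty_iff_forall_notMem]
        intro μ hμ
        rw [Finset.Nat.mem_antidiagonalTuple] at hμ
        simp at hμ; omega
      rw [Nat.sub_zero, h1]; ring
    · have h1 : esymmAux x k = 0 := by
        unfold esymmAux
        convert Finset.sum_empty
        rw [Finset.eq_empty_iff_forall_notMem]
        intro s hs
        rw [Finset.mem_powersetCard] at hs
        obtain ⟨-, h3⟩ := hs
        have h2 : s.card ≤ 0 := by simpa using Finset.card_le_univ s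
        omega
      rw [h1]; ring
  -- main case
  set z : Fin n := ⟨0, hn⟩ with hz
  -- Step 1: rewrite each term as a double sum
  have step1 : ∀ k ∈ Finset.range (N + 1), (-1 : R) ^ k * esymmAux x k * hsymmAux x (N - k)
      = ∑ S ∈ Finset.powersetCard k (Finset.univ : Finset (Fin n)),
          ∑ μ ∈ Finset.Nat.antidiagonalTuple n (N - S.card),
            (-1 : R) ^ S.card * ∏ i, x i ^ (μ i + if i ∈ S then 1 else 0) := by
    intro k _
    unfold esymmAux hsymmAux
    rw [mul_assoc, Finset.sum_mul_sum, Finset.mul_sum]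
    refine Finset.sum_congr rfl fun S hS => ?_
    have hcard : S.card = k := (Finset.mem_powersetCard.mp hS).2
    rw [Finset.mul_sum, ← hcard]
    refine Finset.sum_congr rfl fun μ _ => ?_
    congr 1
    rw [← Fintype.prod_ite_mem S x, ← Finset.prod_mul_distrib]
    refine Finset.prod_congr rfl fun i _ => ?_
    split_ifs with h
    · rw [pow_add, pow_one, mul_comm]
    · rw [add_zero, one_mul]
  rw [Finset.sum_congr rfl step1]
  -- Step 2: collapse the outer two sums into a sum over a filtered powerset
  set P : Finset (Finset (Fin n)) :=
    Finset.univ.powerset.filter (fun S => S.card ≤ N) with hP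
  have step2 : ∀ k ∈ Finset.range (N + 1),
      Finset.powersetCard k (Finset.univ : Finset (Fin n)) = P.filter (fun S => S.card = k) := by
    intro k hk
    rw [Finset.mem_range] at hk
    ext S
    simp only [Finset.mem_powersetCard, hP, Finset.mem_filter, Finset.mem_powerset]
    constructor
    · rintro ⟨h1, h2⟩; exact ⟨⟨h1, by omega⟩, h2⟩
    · rintro ⟨⟨h1, _⟩, h2⟩; exact ⟨h1, h2⟩
  rw [Finset.sum_congr rfl (fun k hk => by rw [step2 k hk])]
  rw [Finset.sum_fiberwise_of_maps_to (fun S hS => by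
    rw [Finset.mem_range]
    have := (Finset.mem_filter.mp hS).2
    omega)]
  rw [Finset.sum_sigma']
  set Ω := P.sigma (fun S => Finset.Nat.antidiagonalTuple n (N - S.card)) with hΩ
  have hmemΩ : ∀ p : Σ _ : Finset (Fin n), (Fin n → ℕ),
      p ∈ Ω ↔ p.1.card ≤ N ∧ ∑ i, p.2 i = N - p.1.card := by
    intro p
    rw [hΩ, Finset.mem_sigma, Finset.Nat.mem_antidiagonalTuple, hP]
    simp [Finset.mem_filter, Finset.mem_powerset, Finset.subset_univ]
  -- the "top index" and its properties
  have hspec : ∀ p : Σ _ : Finset (Fin n), (Fin n → ℕ), p ∈ Ω →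
      (((p.1 ∪ Finset.univ.filter (fun j => p.2 j ≠ 0)).max).getD z ∈ p.1 ∨
        p.2 (((p.1 ∪ Finset.univ.filter (fun j => p.2 j ≠ 0)).max).getD z) ≠ 0) ∧
      (∀ j : Fin n, (j ∈ p.1 ∨ p.2 j ≠ 0) →
        j ≤ ((p.1 ∪ Finset.univ.filter (fun j => p.2 j ≠ 0)).max).getD z) := by
    intro p hp
    set A := p.1 ∪ Finset.univ.filter (fun j => p.2 j ≠ 0) with hA
    have hmem_A : ∀ j : Fin n, j ∈ A ↔ (j ∈ p.1 ∨ p.2 j ≠ 0) := by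
      intro j; rw [hA]; simp
    have hne : A.Nonempty := by
      rcases A.eq_empty_or_nonempty with hE | h
      · exfalso
        have h2 : ∀ j, p.2 j = 0 := by
          intro j
          by_contra hj
          have : j ∈ A := (hmem_A j).mpr (Or.inr hj)
          rw [hE] at this; simp at this
        have h1 : p.1 = ∅ := by
          rw [Finset.eq_empty_iff_forall_notMem]
          intro j hj
          have : j ∈ A := (hmem_A j).mpr (Or.inl hj)
          rw [hE] at this; simp at this
        have h3 := (hmemΩ p).mp hp
        rw [h1] at h3
        simp [h2] at h3
        omega
      · exact h
    have hgd : A.max.getD z = A.max' hne := by rw [← Finset.coe_max' hne]; rfl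
    constructor
    · rw [← hmem_A, hgd]; exact A.max'_mem hne
    · intro j hj
      rw [hgd]
      exact Finset.le_max' A j ((hmem_A j).mpr hj)
  refine Finset.sum_involution (fun p _ => invo z p) ?_ ?_ ?_ ?_
  · -- cancellation
    rintro ⟨S, μ⟩ hp
    beta_reduce
    obtain ⟨hiA, hub⟩ := hspec ⟨S, μ⟩ hp
    set i : Fin n := ((S ∪ Finset.univ.filter (fun j => μ j ≠ 0)).max).getD z with hi
    by_cases hc : i ∈ S
    · have hinv : invo z ⟨S, μ⟩ = ⟨S.erase i, Function.update μ i (μ i + 1)⟩ := by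
        simp only [invo, ← hi, hc, if_true]
      rw [hinv]
      have hprod : (∏ j, x j ^ (Function.update μ i (μ i + 1) j +
            if j ∈ S.erase i then 1 else 0)) =
          ∏ j, x j ^ (μ j + if j ∈ S then 1 else 0) := by
        refine Finset.prod_congr rfl fun j _ => ?_
        by_cases hj : j = i
        · subst hj
          rw [Function.update_self]
          simp [hc, Finset.mem_erase]
        · rw [Function.update_of_ne hj]
          congr 2
          simp [Finset.mem_erase, hj]
      have hcard : (S.erase i).card = S.card - 1 := Finset.card_erase_of_mem hc
      have hpos : 1 ≤ S.card := Finset.card_pos.mpr ⟨i, hc⟩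
      obtain ⟨c, hcc⟩ : ∃ c, S.card = c + 1 := ⟨S.card - 1, by omega⟩
      show (-1 : R) ^ S.card * _ + (-1 : R) ^ (S.erase i).card * _ = 0
      rw [hprod, hcard, hcc]
      simp only [Nat.add_sub_cancel]
      rw [pow_succ]
      ring
    · have hμi : μ i ≠ 0 := hiA.resolve_left hc
      have hinv : invo z ⟨S, μ⟩ = ⟨insert i S, Function.update μ i (μ i - 1)⟩ := by
        simp only [invo, ← hi, hc, if_false]
      rw [hinv]
      have hprod : (∏ j, x j ^ (Function.update μ i (μ i - 1) j +
            if j ∈ insert i S then 1 else 0)) =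
          ∏ j, x j ^ (μ j + if j ∈ S then 1 else 0) := by
        refine Finset.prod_congr rfl fun j _ => ?_
        by_cases hj : j = i
        · subst hj
          rw [Function.update_self]
          rw [if_pos (Finset.mem_insert_self i S), if_neg hc]
          congr 1
          omega
        · rw [Function.update_of_ne hj]
          congr 2
          simp [Finset.mem_insert, hj]
      have hcard : (insert i S).card = S.card + 1 := Finset.card_insert_of_notMem hc
      show (-1 : R) ^ S.card * _ + (-1 : R) ^ (insert i S).card * _ = 0
      rw [hprod, hcard, pow_succ]
      ring
  · -- g a ≠ a
    rintro ⟨S, μ⟩ hp -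
    beta_reduce
    obtain ⟨hiA, hub⟩ := hspec ⟨S, μ⟩ hp
    set i : Fin n := ((S ∪ Finset.univ.filter (fun j => μ j ≠ 0)).max).getD z with hi
    by_cases hc : i ∈ S
    · have hinv : invo z ⟨S, μ⟩ = ⟨S.erase i, Function.update μ i (μ i + 1)⟩ := by
        simp only [invo, ← hi, hc, if_true]
      rw [hinv]
      intro h
      have h1 : S.erase i = S := congrArg Sigma.fst h
      exact (Finset.notMem_erase i S) (by rw [h1]; exact hc)
    · have hinv : invo z ⟨S, μ⟩ = ⟨insert i S, Function.update μ i (μ i - 1)⟩ := by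
        simp only [invo, ← hi, hc, if_false]
      rw [hinv]
      intro h
      have h1 : insert i S = S := congrArg Sigma.fst h
      exact hc (h1 ▸ Finset.mem_insert_self i S)
  · -- membership
    rintro ⟨S, μ⟩ hp
    beta_reduce
    obtain ⟨hiA, hub⟩ := hspec ⟨S, μ⟩ hp
    obtain ⟨hc1, hc2⟩ := (hmemΩ ⟨S, μ⟩).mp hp
    have hc1' : S.card ≤ N := hc1
    set i : Fin n := ((S ∪ Finset.univ.filter (fun j => μ j ≠ 0)).max).getD z with hi
    have hsum : ∑ j, μ j = N - S.card := hc2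
    have hμsplit : μ i + ∑ j ∈ Finset.univ \ {i}, μ j = ∑ j, μ j := by
      rw [← Finset.erase_eq]
      exact Finset.add_sum_erase Finset.univ μ (Finset.mem_univ i)
    by_cases hc : i ∈ S
    · have hinv : invo z ⟨S, μ⟩ = ⟨S.erase i, Function.update μ i (μ i + 1)⟩ := by
        simp only [invo, ← hi, hc, if_true]
      rw [hinv, hmemΩ]
      have hcard : (S.erase i).card = S.card - 1 := Finset.card_erase_of_mem hc
      have hpos : 1 ≤ S.card := Finset.card_pos.mpr ⟨i, hc⟩
      have hupd : ∑ j, Function.update μ i (μ i + 1) j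
          = (μ i + 1) + ∑ j ∈ Finset.univ \ {i}, μ j :=
        Finset.sum_update_of_mem (Finset.mem_univ i) _ _
      constructor
      · show (S.erase i).card ≤ N
        omega
      · show ∑ j, Function.update μ i (μ i + 1) j = N - (S.erase i).card
        rw [hupd, hcard]
        omega
    · have hμi : μ i ≠ 0 := hiA.resolve_left hc
      have hinv : invo z ⟨S, μ⟩ = ⟨insert i S, Function.update μ i (μ i - 1)⟩ := by
        simp only [invo, ← hi, hc, if_false]
      rw [hinv, hmemΩ]
      have hcard : (insert i S).card = S.card + 1 := Finset.card_insert_of_notMem hc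
      have hupd : ∑ j, Function.update μ i (μ i - 1) j
          = (μ i - 1) + ∑ j ∈ Finset.univ \ {i}, μ j :=
        Finset.sum_update_of_mem (Finset.mem_univ i) _ _
      constructor
      · show (insert i S).card ≤ N
        omega
      · show ∑ j, Function.update μ i (μ i - 1) j = N - (insert i S).card
        rw [hupd, hcard]
        omega
  · -- involution
    rintro ⟨S, μ⟩ hp
    beta_reduce
    obtain ⟨hiA, hub⟩ := hspec ⟨S, μ⟩ hp
    set i : Fin n := ((S ∪ Finset.univ.filter (fun j => μ j ≠ 0)).max).getD z with hi
    by_cases hc : i ∈ S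
    · have hinv : invo z ⟨S, μ⟩ = ⟨S.erase i, Function.update μ i (μ i + 1)⟩ := by
        simp only [invo, ← hi, hc, if_true]
      rw [hinv]
      set μ' := Function.update μ i (μ i + 1) with hμ'
      have hmax : ((S.erase i ∪ Finset.univ.filter (fun j => μ' j ≠ 0)).max).getD z = i := by
        apply getD_max
        · apply Finset.mem_union_right
          simp only [Finset.mem_filter, Finset.mem_univ, true_and, hμ']
          rw [Function.update_self]
          omega
        · intro j hj
          rcases Finset.mem_union.mp hj with hj1 | hj2
          · exact hub j (Or.inl (Finset.mem_of_mem_erase hj1))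
          · by_cases hji : j = i
            · exact le_of_eq hji
            · apply hub j
              refine Or.inr ?_
              have := (Finset.mem_filter.mp hj2).2
              rwa [hμ', Function.update_of_ne hji] at this
      have hnotmem : i ∉ S.erase i := Finset.notMem_erase i S
      show invo z ⟨S.erase i, μ'⟩ = ⟨S, μ⟩
      simp only [invo, hmax, hnotmem, if_false]
      have h1 : insert i (S.erase i) = S := Finset.insert_erase hc
      have h2 : Function.update μ' i (μ' i - 1) = μ := by
        rw [hμ', Function.update_idem, Function.update_self]
        simp only [Nat.add_sub_cancel]
        exact Function.update_eq_self i μ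
      rw [h1, h2]
    · have hμi : μ i ≠ 0 := hiA.resolve_left hc
      have hinv : invo z ⟨S, μ⟩ = ⟨insert i S, Function.update μ i (μ i - 1)⟩ := by
        simp only [invo, ← hi, hc, if_false]
      rw [hinv]
      set μ' := Function.update μ i (μ i - 1) with hμ'
      have hmax : (((insert i S) ∪ Finset.univ.filter (fun j => μ' j ≠ 0)).max).getD z = i := by
        apply getD_max
        · exact Finset.mem_union_left _ (Finset.mem_insert_self i S)
        · intro j hj
          rcases Finset.mem_union.mp hj with hj1 | hj2
          · rcases Finset.mem_insert.mp hj1 with hj1 | hj1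
            · exact le_of_eq hj1
            · exact hub j (Or.inl hj1)
          · by_cases hji : j = i
            · exact le_of_eq hji
            · apply hub j
              refine Or.inr ?_
              have := (Finset.mem_filter.mp hj2).2
              rwa [hμ', Function.update_of_ne hji] at this
      have hmem2 : i ∈ insert i S := Finset.mem_insert_self i S
      show invo z ⟨insert i S, μ'⟩ = ⟨S, μ⟩
      simp only [invo, hmax, hmem2, if_true]
      have h1 : (insert i S).erase i = S := Finset.erase_insert hc
      have h2 : Function.update μ' i (μ' i + 1) = μ := by
        rw [hμ', Function.update_idem, Function.update_self]
        have : μ i - 1 + 1 = μ i := by omega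
        rw [this]
        exact Function.update_eq_self i μ
      rw [h1, h2]

lemma lemA (x : Fin n → R) (N : ℕ) (hN : 1 ≤ N) :
    ∑ j ∈ Finset.range N, (-1 : R) ^ j * esymmAux x (j + 1) * hsymmAux x (N - 1 - j)
      = hsymmAux x N := by
  have hk := key x N hN
  rw [Finset.sum_range_succ'] at hk
  have h1 : ∀ j ∈ Finset.range N, (-1 : R) ^ (j + 1) * esymmAux x (j + 1)
        * hsymmAux x (N - (j + 1))
      = -((-1 : R) ^ j * esymmAux x (j + 1) * hsymmAux x (N - 1 - j)) := by
    intro j _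
    have h2 : N - (j + 1) = N - 1 - j := by omega
    rw [h2, pow_succ]
    ring
  rw [Finset.sum_congr rfl h1, Finset.sum_neg_distrib, esymmAux_zero, Nat.sub_zero,
    pow_zero] at hk
  linear_combination -hk

lemma sum_range_F (x : Fin n → R) (s t k : ℕ) (hs : s ≤ k) (ht : t ≤ k) :
    ∑ u ∈ Finset.range (k + 1),
      (if s = u + 1 then (-1 : R)
        else if s ≤ u then (-1 : R) ^ (u - s) * esymmAux x (u - s + 1) else 0)
        * (if u ≤ t then hsymmAux x (t - u) else 0)
    = if s = 0 then hsymmAux x (t + 1) else if s = t + 1 then (-1 : R) else 0 := by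
  by_cases hs0 : s = 0
  · subst hs0
    rw [if_pos rfl]
    have hcong : ∀ u ∈ Finset.range (k + 1),
        (if (0 : ℕ) = u + 1 then (-1 : R)
          else if 0 ≤ u then (-1 : R) ^ (u - 0) * esymmAux x (u - 0 + 1) else 0)
          * (if u ≤ t then hsymmAux x (t - u) else 0)
        = if u ≤ t then (-1 : R) ^ u * esymmAux x (u + 1) * hsymmAux x (t - u) else 0 := by
      intro u _
      rw [if_neg (by omega), if_pos (Nat.zero_le u), Nat.sub_zero]
      split_ifs with h <;> ring
    rw [Finset.sum_congr rfl hcong, ← Finset.sum_filter]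
    have hfil : (Finset.range (k + 1)).filter (fun u => u ≤ t) = Finset.range (t + 1) := by
      ext u
      simp only [Finset.mem_filter, Finset.mem_range]
      omega
    rw [hfil]
    have hA := lemA x (t + 1) (by omega)
    rw [← hA]
    refine Finset.sum_congr rfl fun j _ => ?_
    congr 2
    all_goals omega
  · have hdecomp : ∀ u ∈ Finset.range (k + 1),
        (if s = u + 1 then (-1 : R)
          else if s ≤ u then (-1 : R) ^ (u - s) * esymmAux x (u - s + 1) else 0)
          * (if u ≤ t then hsymmAux x (t - u) else 0)
        = (if u = s - 1 then -(if u ≤ t then hsymmAux x (t - u) else 0) else 0)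
          + (if s ≤ u ∧ u ≤ t then
              (-1 : R) ^ (u - s) * esymmAux x (u - s + 1) * hsymmAux x (t - u) else 0) := by
      intro u _
      by_cases h1 : s = u + 1
      · rw [if_pos h1, if_pos (by omega : u = s - 1), if_neg (by omega : ¬(s ≤ u ∧ u ≤ t))]
        ring
      · rw [if_neg h1, if_neg (by omega : ¬ u = s - 1)]
        by_cases h2 : s ≤ u
        · rw [if_pos h2]
          by_cases h3 : u ≤ t
          · rw [if_pos h3, if_pos ⟨h2, h3⟩]
            ring
          · rw [if_neg h3, if_neg (by omega : ¬(s ≤ u ∧ u ≤ t))]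
            ring
        · rw [if_neg h2, if_neg (by omega : ¬(s ≤ u ∧ u ≤ t))]
          ring
    rw [Finset.sum_congr rfl hdecomp, Finset.sum_add_distrib]
    have hfirst : ∑ u ∈ Finset.range (k + 1),
        (if u = s - 1 then -(if u ≤ t then hsymmAux x (t - u) else 0) else 0)
        = -(if s - 1 ≤ t then hsymmAux x (t - (s - 1)) else 0) := by
      rw [Finset.sum_ite_eq' (Finset.range (k + 1)) (s - 1)
        (fun u => -(if u ≤ t then hsymmAux x (t - u) else 0))]
      rw [if_pos (Finset.mem_range.mpr (by omega))]
    have hsecond : ∑ u ∈ Finset.range (k + 1),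
        (if s ≤ u ∧ u ≤ t then
          (-1 : R) ^ (u - s) * esymmAux x (u - s + 1) * hsymmAux x (t - u) else 0)
        = ∑ j ∈ Finset.range (t + 1 - s),
            (-1 : R) ^ j * esymmAux x (j + 1) * hsymmAux x (t - s - j) := by
      rw [← Finset.sum_filter]
      have hfil : (Finset.range (k + 1)).filter (fun u => s ≤ u ∧ u ≤ t)
          = Finset.Ico s (t + 1) := by
        ext u
        simp only [Finset.mem_filter, Finset.mem_range, Finset.mem_Ico]
        omega
      rw [hfil, Finset.sum_Ico_eq_sum_range]
      refine Finset.sum_congr rfl fun j _ => ?_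
      have e1 : s + j - s = j := by omega
      have e2 : t - (s + j) = t - s - j := by omega
      rw [e1, e2]
    rw [hfirst, hsecond]
    by_cases hst : s ≤ t
    · rw [if_neg hs0, if_neg (show ¬ s = t + 1 by omega)]
      rw [if_pos (show s - 1 ≤ t by omega)]
      have h2 : t - (s - 1) = t - s + 1 := by omega
      have h3 : t + 1 - s = t - s + 1 := by omega
      rw [h2, h3]
      have hA := lemA x (t - s + 1) (by omega)
      have h5 : ∑ j ∈ Finset.range (t - s + 1),
          (-1 : R) ^ j * esymmAux x (j + 1) * hsymmAux x (t - s - j)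
          = hsymmAux x (t - s + 1) := by
        rw [← hA]
        refine Finset.sum_congr rfl fun j _ => ?_
        congr 2
        all_goals omega
      rw [h5]
      ring
    · by_cases hst2 : s = t + 1
      · rw [if_neg hs0, if_pos hst2]
        rw [if_pos (by omega : s - 1 ≤ t), show t - (s - 1) = 0 by omega, hsymmAux_zero]
        rw [show t + 1 - s = 0 by omega]
        simp
      · rw [if_neg hs0, if_neg hst2]
        rw [if_neg (by omega : ¬ s - 1 ≤ t), show t + 1 - s = 0 by omega]
        simp

lemma det_eq (x : Fin n → R) (d : ℕ) (hd : 1 ≤ d) :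
    (Matrix.of fun s t : Fin d =>
        if (s : ℕ) = (t : ℕ) + 1 then (-1 : R)
        else if (s : ℕ) ≤ (t : ℕ) then
          (-1 : R) ^ ((t : ℕ) - (s : ℕ)) * esymmAux x ((t : ℕ) - (s : ℕ) + 1)
        else 0).det
      = hsymmAux x d := by
  obtain ⟨k, rfl⟩ : ∃ k, d = k + 1 := ⟨d - 1, by omega⟩
  set Q : Matrix (Fin (k + 1)) (Fin (k + 1)) R := Matrix.of fun s t : Fin (k + 1) =>
    if (s : ℕ) = (t : ℕ) + 1 then (-1 : R)
    else if (s : ℕ) ≤ (t : ℕ) then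
      (-1 : R) ^ ((t : ℕ) - (s : ℕ)) * esymmAux x ((t : ℕ) - (s : ℕ) + 1)
    else 0 with hQ
  set T : Matrix (Fin (k + 1)) (Fin (k + 1)) R := Matrix.of fun s t : Fin (k + 1) =>
    if (s : ℕ) ≤ (t : ℕ) then hsymmAux x ((t : ℕ) - (s : ℕ)) else 0 with hT
  set M : Matrix (Fin (k + 1)) (Fin (k + 1)) R := Matrix.of fun s t : Fin (k + 1) =>
    if (s : ℕ) = 0 then hsymmAux x ((t : ℕ) + 1)
    else if (s : ℕ) = (t : ℕ) + 1 then (-1 : R) else 0 with hM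
  have hdetT : T.det = 1 := by
    rw [Matrix.det_of_upperTriangular]
    · apply Finset.prod_eq_one
      intro i _
      show (if (i : ℕ) ≤ (i : ℕ) then hsymmAux x ((i : ℕ) - (i : ℕ)) else 0) = 1
      rw [if_pos le_rfl, Nat.sub_self, hsymmAux_zero]
    · intro i j hji
      show (if (i : ℕ) ≤ (j : ℕ) then hsymmAux x ((j : ℕ) - (i : ℕ)) else 0) = 0
      have : (j : ℕ) < (i : ℕ) := hji
      rw [if_neg (by omega)]
  have hQT : Q * T = M := by
    ext s t
    rw [Matrix.mul_apply]
    have h1 : ∑ u : Fin (k + 1), Q s u * T u t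
        = ∑ u ∈ Finset.range (k + 1),
            (if (s : ℕ) = u + 1 then (-1 : R)
              else if (s : ℕ) ≤ u then
                (-1 : R) ^ (u - (s : ℕ)) * esymmAux x (u - (s : ℕ) + 1) else 0)
            * (if u ≤ (t : ℕ) then hsymmAux x ((t : ℕ) - u) else 0) := by
      rw [← Fin.sum_univ_eq_sum_range (fun u =>
            (if (s : ℕ) = u + 1 then (-1 : R)
              else if (s : ℕ) ≤ u then
                (-1 : R) ^ (u - (s : ℕ)) * esymmAux x (u - (s : ℕ) + 1) else 0)
            * (if u ≤ (t : ℕ) then hsymmAux x ((t : ℕ) - u) else 0)) (k + 1)]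
      exact Finset.sum_congr rfl fun u _ => rfl
    rw [h1, sum_range_F x (s : ℕ) (t : ℕ) k (by omega) (by omega)]
    rfl
  have hdet1 : Q.det = M.det := by
    rw [← hQT, Matrix.det_mul, hdetT, mul_one]
  rw [hdet1]
  rw [Matrix.det_succ_column M (Fin.last k)]
  rw [Finset.sum_eq_single (0 : Fin (k + 1))]
  · have h0 : M 0 (Fin.last k) = hsymmAux x (k + 1) := by
      show (if ((0 : Fin (k + 1)) : ℕ) = 0 then hsymmAux x (((Fin.last k) : ℕ) + 1)
        else if ((0 : Fin (k + 1)) : ℕ) = ((Fin.last k) : ℕ) + 1 then (-1 : R) else 0)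
        = hsymmAux x (k + 1)
      simp [Fin.val_last]
    rw [h0]
    have hminor : M.submatrix (Fin.succAbove 0) (Fin.succAbove (Fin.last k))
        = Matrix.diagonal (fun _ : Fin k => (-1 : R)) := by
      ext a b
      rw [Matrix.submatrix_apply, Fin.zero_succAbove, Fin.succAbove_last]
      show (if ((a.succ : Fin (k + 1)) : ℕ) = 0 then hsymmAux x (((b.castSucc : Fin (k + 1)) : ℕ) + 1)
        else if ((a.succ : Fin (k + 1)) : ℕ) = ((b.castSucc : Fin (k + 1)) : ℕ) + 1
          then (-1 : R) else 0) = Matrix.diagonal (fun _ : Fin k => (-1 : R)) a b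
      rw [if_neg (by simp)]
      by_cases hab : a = b
      · subst hab
        rw [if_pos (by simp), Matrix.diagonal_apply_eq]
      · rw [if_neg (by
          simp only [Fin.val_succ, Fin.coe_castSucc]
          exact fun h => hab (Fin.ext (by omega))), Matrix.diagonal_apply_ne _ hab]
    rw [hminor, Matrix.det_diagonal, Finset.prod_const]
    have hcard : (Finset.univ : Finset (Fin k)).card = k := by simp
    rw [hcard]
    have hv : (((0 : Fin (k + 1)) : ℕ) + ((Fin.last k : Fin (k + 1)) : ℕ)) = k := by
      simp
    rw [hv]
    have hsq : (-1 : R) ^ k * (-1 : R) ^ k = 1 := by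
      rw [← pow_add, ← two_mul, pow_mul, neg_one_sq, one_pow]
    calc (-1 : R) ^ k * hsymmAux x (k + 1) * (-1 : R) ^ k
        = ((-1 : R) ^ k * (-1 : R) ^ k) * hsymmAux x (k + 1) := by ring
      _ = hsymmAux x (k + 1) := by rw [hsq, one_mul]
  · intro i _ hne
    have h1 : M i (Fin.last k) = 0 := by
      show (if (i : ℕ) = 0 then hsymmAux x (((Fin.last k) : ℕ) + 1)
        else if (i : ℕ) = ((Fin.last k) : ℕ) + 1 then (-1 : R) else 0) = 0
      have hlt : (i : ℕ) < k + 1 := i.isLt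
      have hne' : (i : ℕ) ≠ 0 := fun h => hne (Fin.ext h)
      rw [if_neg hne', if_neg (by simp only [Fin.val_last]; omega)]
    rw [h1]
    ring
  · intro h
    exact absurd (Finset.mem_univ (0 : Fin (k + 1))) h

end Stmt13Aux

/-- the `(m-n)×(m-n)` upper-Hessenberg matrix with entries
`(-1)^{t-s} e_{t-s+1}` on and above the diagonal and `-1` on the subdiagonal
has determinant `h_{m-n}` (note `esymmAux x d = 0` for `d > n`). -/
theorem stmt13 {R : Type*} [CommRing R] (n m : ℕ) (hm : n < m) (x : Fin n → R) :
    (Matrix.of fun s t : Fin (m-n) =>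
        if (s : ℕ) = (t : ℕ) + 1 then (-1 : R)
        else if (s : ℕ) ≤ (t : ℕ) then
          (-1 : R) ^ ((t : ℕ) - (s : ℕ)) * esymmAux x ((t : ℕ) - (s : ℕ) + 1)
        else 0).det
      = hsymmAux x (m - n) :=
  Stmt13Aux.det_eq x (m - n) (by omega)
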